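/- Let r(z) = z log(1+z) for z > -1 and let r* be its Legendre transform, r*(p) = sup_{z > -1} (p z - r(z)). Then r* is superquadratic in the sense that r*(λ p) ≤ λ² r*(p) for every p > 0 and every λ ∈ [0,1]. -/

import Mathlib

open Real Set

lemma key_log_aux (lam u : ℝ) (h0 : 0 < lam) (h1 : lam ≤ 1) (hu : 0 ≤ u) :
    lam * Real.log (1 + u) ≤ Real.log (1 + lam * u) := by
  have hc := strictConcaveOn_log_Ioi.concaveOn.2 (x := 1 + u) (y := 1)
    (by simp only [mem_Ioi]; linarith) (by norm_num) h0.le (by linarith : (0:ℝ) ≤ 1 - lam)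
    (by ring)
  simp only [smul_eq_mul, Real.log_one, mul_zero, add_zero, mul_one] at hc
  have : lam * (1 + u) + (1 - lam) = 1 + lam * u := by ring
  rw [this] at hc
  exact hc

lemma r_nonneg (z : ℝ) (hz : -1 < z) : 0 ≤ z * Real.log (1 + z) := by
  rcases le_or_gt 0 z with h | h
  · exact mul_nonneg h (Real.log_nonneg (by linarith))
  · have hlog : Real.log (1 + z) ≤ 0 := Real.log_nonpos (by linarith) (by linarith)
    nlinarith

lemma bdd_above_set (r : ℝ → ℝ) (hr : ∀ z, r z = z * Real.log (1 + z)) (p : ℝ)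
    (hp : 0 ≤ p) : BddAbove {y : ℝ | ∃ z > (-1 : ℝ), y = p * z - r z} := by
  refine ⟨p * Real.exp p, ?_⟩
  rintro y ⟨z, hz, rfl⟩
  rw [hr]
  have hep : 0 ≤ p * Real.exp p := mul_nonneg hp (Real.exp_pos p).le
  rcases le_or_gt z 0 with h | h
  · have h1 : p * z ≤ 0 := mul_nonpos_of_nonneg_of_nonpos hp h
    have h2 := r_nonneg z hz
    linarith
  · rcases le_or_gt z (Real.exp p - 1) with h2 | h2
    · have hlz : 0 ≤ Real.log (1 + z) := Real.log_nonneg (by linarith)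
      have : p * z ≤ p * Real.exp p := by nlinarith [Real.exp_pos p]
      nlinarith
    · have : p ≤ Real.log (1 + z) := by
        rw [Real.le_log_iff_exp_le (by linarith)]
        linarith
      nlinarith

theorem rstar_superquadratic (r rstar : ℝ → ℝ)
    (hr : ∀ z, r z = z * Real.log (1 + z))
    (hrstar : ∀ p, rstar p = sSup {y : ℝ | ∃ z > (-1 : ℝ), y = p * z - r z}) :
    ∀ p > 0, ∀ lam ∈ Icc (0 : ℝ) 1, rstar (lam * p) ≤ lam ^ 2 * rstar p := by
  intro p hp lam ⟨hl0, hl1⟩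
  have hbdd := bdd_above_set r hr p hp.le
  have hrp0 : 0 ≤ rstar p := by
    rw [hrstar]
    refine le_csSup hbdd ⟨0, by norm_num, ?_⟩
    rw [hr]; norm_num
  rcases eq_or_lt_of_le hl0 with heq | hl0'
  · have h1 : rstar (lam * p) ≤ 0 := by
      rw [hrstar]
      refine Real.sSup_le ?_ le_rfl
      rintro y ⟨z, hz, rfl⟩
      rw [hr, ← heq]
      have := r_nonneg z hz
      linarith
    have h2 : lam ^ 2 * rstar p = 0 := by rw [← heq]; ring
    linarith
  · rw [hrstar (lam * p), hrstar p]
    refine Real.sSup_le ?_ ?_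
    · rintro y ⟨z, hz, rfl⟩
      rcases le_or_gt z 0 with h | h
      · have h1 : lam * p * z ≤ 0 :=
          mul_nonpos_of_nonneg_of_nonpos (mul_nonneg hl0 hp.le) h
        have h2 := r_nonneg z hz
        have h3 : 0 ≤ lam ^ 2 * sSup {y : ℝ | ∃ z > (-1 : ℝ), y = p * z - r z} := by
          refine mul_nonneg (sq_nonneg lam) ?_
          refine le_csSup hbdd ⟨0, by norm_num, ?_⟩
          rw [hr]; norm_num
        rw [hr]
        linarith
      · set w := z / lam with hw
        have hw0 : 0 < w := div_pos h hl0'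
        have hmem : p * w - r w ∈ {y : ℝ | ∃ z > (-1 : ℝ), y = p * z - r z} :=
          ⟨w, by linarith, rfl⟩
        have hle := le_csSup hbdd hmem
        have key : lam * p * z - r z ≤ lam ^ 2 * (p * w - r w) := by
          rw [hr, hr]
          have hzw : z = lam * w := by rw [hw]; field_simp [hl0'.ne']
          have hkey := key_log_aux lam w hl0' hl1 hw0.le
          rw [hzw]
          have : lam * (lam * w) * Real.log (1 + lam * w)
              ≥ lam * (lam * w) * (lam * Real.log (1 + w)) := by
            have := mul_nonneg (mul_nonneg hl0'.le hl0'.le) hw0.le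
            nlinarith
          nlinarith
        calc lam * p * z - r z ≤ lam ^ 2 * (p * w - r w) := key
          _ ≤ lam ^ 2 * sSup {y : ℝ | ∃ z > (-1 : ℝ), y = p * z - r z} :=
            mul_le_mul_of_nonneg_left hle (sq_nonneg lam)
    · refine mul_nonneg (sq_nonneg lam) ?_
      refine le_csSup hbdd ⟨0, by norm_num, ?_⟩
      rw [hr]; norm_num
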